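/- Every connected bialgebra is a Hopf algebra, i.e. the identity map has a convolution inverse S, and S satisfies S(x) = −x − Σ S(x′)x″ on the augmentation ideal, where Δ̃(x) = Σ x′ ⊗ x″ is the reduced coproduct. -/

import Mathlib

open TensorProduct

variable {K : Type*} [Field K]
variable {H : Type*} [Ring H] [Bialgebra K H]

/-- The convolution product on `End(H)`. -/
noncomputable def conv (f g : H →ₗ[K] H) : H →ₗ[K] H :=
  (LinearMap.mul' K H) ∘ₗ (TensorProduct.map f g) ∘ₗ (Coalgebra.comul (R := K))

/-- The convolution unit `e = u ∘ ε`. -/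
noncomputable def convUnit : H →ₗ[K] H :=
  (Algebra.linearMap K H) ∘ₗ (Coalgebra.counit (R := K))

/-- The image `p ⊗ q` of a pair of submodules inside `H ⊗ H`. -/
noncomputable def tensorSub (p q : Submodule K H) : Submodule K (H ⊗[K] H) :=
  LinearMap.range (TensorProduct.map p.subtype q.subtype)

lemma conv_apply (f g : H →ₗ[K] H) (x : H) :
    conv f g x = LinearMap.mul' K H (TensorProduct.map f g (Coalgebra.comul (R := K) x)) := rfl

lemma conv_unit_right (f : H →ₗ[K] H) : conv f convUnit = f := by
  ext x
  have h1 : TensorProduct.map f (convUnit (K := K) (H := H)) =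
      TensorProduct.map f (Algebra.linearMap K H) ∘ₗ
        (Coalgebra.counit (R := K) (A := H)).lTensor H := by
    apply TensorProduct.ext'; intro a b; simp [convUnit]
  rw [conv_apply, h1, LinearMap.comp_apply, Coalgebra.lTensor_counit_comul]
  simp

lemma conv_unit_left (f : H →ₗ[K] H) : conv convUnit f = f := by
  ext x
  have h1 : TensorProduct.map (convUnit (K := K) (H := H)) f =
      TensorProduct.map (Algebra.linearMap K H) f ∘ₗ
        (Coalgebra.counit (R := K) (A := H)).rTensor H := by
    apply TensorProduct.ext'; intro a b; simp [convUnit]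
  rw [conv_apply, h1, LinearMap.comp_apply, Coalgebra.rTensor_counit_comul]
  simp

lemma conv_add_left (f f' g : H →ₗ[K] H) : conv (f + f') g = conv f g + conv f' g := by
  ext x; simp [conv_apply, TensorProduct.map_add_left]

lemma conv_add_right (f g g' : H →ₗ[K] H) : conv f (g + g') = conv f g + conv f g' := by
  ext x; simp [conv_apply, TensorProduct.map_add_right]

lemma conv_smul_left (c : K) (f g : H →ₗ[K] H) : conv (c • f) g = c • conv f g := by
  ext x; simp [conv_apply, TensorProduct.map_smul_left]

lemma map_sub_left (f f' g : H →ₗ[K] H) :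
    TensorProduct.map (f - f') g = TensorProduct.map f g - TensorProduct.map f' g := by
  apply TensorProduct.ext'; intro a b; simp [TensorProduct.sub_tmul]

lemma map_sub_right (f g g' : H →ₗ[K] H) :
    TensorProduct.map f (g - g') = TensorProduct.map f g - TensorProduct.map f g' := by
  apply TensorProduct.ext'; intro a b; simp [TensorProduct.tmul_sub]

lemma conv_assoc (f g h : H →ₗ[K] H) : conv (conv f g) h = conv f (conv g h) := by
  ext x
  have e1 : TensorProduct.map (conv f g) h =
      TensorProduct.map (LinearMap.mul' K H) LinearMap.id ∘ₗ
        TensorProduct.map (TensorProduct.map f g) h ∘ₗ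
          TensorProduct.map (Coalgebra.comul (R := K)) LinearMap.id := by
    apply TensorProduct.ext'; intro a b
    simp [conv_apply]
  have e2 : TensorProduct.map f (conv g h) =
      TensorProduct.map LinearMap.id (LinearMap.mul' K H) ∘ₗ
        TensorProduct.map f (TensorProduct.map g h) ∘ₗ
          TensorProduct.map LinearMap.id (Coalgebra.comul (R := K)) := by
    apply TensorProduct.ext'; intro a b
    simp [conv_apply]
  have e3 : ∀ s : (H ⊗[K] H) ⊗[K] H,
      LinearMap.mul' K H (TensorProduct.map (LinearMap.mul' K H) LinearMap.id s) =
      LinearMap.mul' K H (TensorProduct.map LinearMap.id (LinearMap.mul' K H)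
        (TensorProduct.assoc K H H H s)) := by
    intro s
    have : (LinearMap.mul' K H ∘ₗ TensorProduct.map (LinearMap.mul' K H) LinearMap.id : (H ⊗[K] H) ⊗[K] H →ₗ[K] H) =
        (LinearMap.mul' K H ∘ₗ TensorProduct.map LinearMap.id (LinearMap.mul' K H)) ∘ₗ
          (TensorProduct.assoc K H H H : (H ⊗[K] H) ⊗[K] H →ₗ[K] H ⊗[K] (H ⊗[K] H)) := by
      apply TensorProduct.ext_threefold; intro a b c
      simp [mul_assoc]
    exact LinearMap.congr_fun this s
  have e5 : TensorProduct.map LinearMap.id (Coalgebra.comul (R := K))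
        (Coalgebra.comul (R := K) x)
      = TensorProduct.assoc K H H H
          (TensorProduct.map (Coalgebra.comul (R := K)) LinearMap.id
            (Coalgebra.comul (R := K) x)) := by
    have := Coalgebra.coassoc_apply (R := K) (A := H) x
    exact this.symm
  rw [conv_apply, conv_apply, e1, e2]
  simp only [LinearMap.comp_apply]
  rw [e3, ← TensorProduct.map_map_assoc, ← e5]

/-- `T = id - e`. -/
noncomputable def convT : H →ₗ[K] H := LinearMap.id - convUnit

/-- Convolution powers of `T`. -/
noncomputable def convPow : ℕ → (H →ₗ[K] H)
  | 0 => convUnit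
  | n + 1 => conv convT (convPow n)

lemma convT_one : convT (K := K) (H := H) 1 = 0 := by
  simp [convT, convUnit]

lemma id_eq_unit_add_T : (LinearMap.id : H →ₗ[K] H) = convUnit + convT := by
  simp [convT]

lemma conv_pow_T (n : ℕ) :
    conv (convPow (K := K) (H := H) n) convT = convPow (n + 1) := by
  induction n with
  | zero => show conv convUnit convT = conv convT convUnit
            rw [conv_unit_left, conv_unit_right]
  | succ n ih =>
      show conv (conv convT (convPow n)) convT = conv convT (convPow (n + 1))
      rw [conv_assoc, ih]

/-- Kill lemma: a linear map vanishing on elementary tensors from `p i ⊗ q i`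
vanishes on the sum of the `tensorSub`s. -/
lemma killer (φ : H ⊗[K] H →ₗ[K] H) (p q : ℕ → Submodule K H) (s : Finset ℕ)
    (h0 : ∀ i ∈ s, ∀ a ∈ p i, ∀ b ∈ q i, φ (a ⊗ₜ[K] b) = 0)
    {t : H ⊗[K] H} (ht : t ∈ ∑ i ∈ s, tensorSub (p i) (q i)) : φ t = 0 := by
  classical
  have key : ∀ (s : Finset ℕ), (∀ i ∈ s, ∀ a ∈ p i, ∀ b ∈ q i, φ (a ⊗ₜ[K] b) = 0) →
      (∑ i ∈ s, tensorSub (p i) (q i)) ≤ LinearMap.ker φ := by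
    intro s
    induction s using Finset.induction_on with
    | empty => intro _; simp
    | insert _ _ hni ih =>
        intro h
        rw [Finset.sum_insert hni, Submodule.add_eq_sup]
        refine sup_le ?_ (ih fun i hi => h i (Finset.mem_insert_of_mem hi))
        rintro t ⟨u, rfl⟩
        induction u with
        | zero => simp
        | tmul a b =>
            simp only [TensorProduct.map_tmul, LinearMap.mem_ker]
            exact h _ (Finset.mem_insert_self _ _) _ a.2 _ b.2
        | add u v hu hv => simp only [map_add, LinearMap.mem_ker] at *; simp [hu, hv]
  exact key s h0 ht

lemma vanish (F : ℕ → Submodule K H) (hmono : Monotone F)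
    (hcomul : ∀ n, ∀ x ∈ F n,
      Coalgebra.comul (R := K) x ∈
        ∑ i ∈ Finset.range (n + 1), tensorSub (F i) (F (n - i)))
    (hconn : F 0 = Submodule.span K {(1 : H)}) :
    ∀ N : ℕ, ∀ x ∈ F N, convPow (K := K) (H := H) (N + 1) x = 0 := by
  intro N
  induction N using Nat.strong_induction_on with
  | _ N ih =>
    intro x hx
    have hΔ := hcomul N x hx
    have hφ : convPow (K := K) (H := H) (N + 1) x =
        (LinearMap.mul' K H ∘ₗ TensorProduct.map convT (convPow N)) (Coalgebra.comul (R := K) x) := rfl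
    rw [hφ]
    refine killer _ _ _ _ ?_ hΔ
    intro i hi a ha b hb
    rcases Nat.eq_zero_or_pos i with h0 | hpos
    · subst h0
      rw [hconn] at ha
      obtain ⟨c, rfl⟩ := Submodule.mem_span_singleton.mp ha
      simp [TensorProduct.smul_tmul', convT_one]
    · have hiN : i ≤ N := Nat.lt_succ_iff.mp (Finset.mem_range.mp hi)
      have hN1 : 1 ≤ N := le_trans hpos hiN
      have hb' : b ∈ F (N - 1) := hmono (by omega) hb
      have : convPow (K := K) (H := H) ((N - 1) + 1) b = 0 := ih (N - 1) (by omega) b hb'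
      rw [show N - 1 + 1 = N by omega] at this
      simp [this]

lemma vanish' (F : ℕ → Submodule K H) (hmono : Monotone F)
    (hcomul : ∀ n, ∀ x ∈ F n,
      Coalgebra.comul (R := K) x ∈
        ∑ i ∈ Finset.range (n + 1), tensorSub (F i) (F (n - i)))
    (hconn : F 0 = Submodule.span K {(1 : H)})
    {N : ℕ} {x : H} (hx : x ∈ F N) : ∀ n, N < n → convPow (K := K) (H := H) n x = 0 := by
  intro n hn
  obtain ⟨k, rfl⟩ : ∃ k, n = k + 1 := ⟨n - 1, by omega⟩
  exact vanish F hmono hcomul hconn k x (hmono (show N ≤ k by omega) hx) 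

/-- The antipode as a pointwise-finite geometric series `∑ (-1)^n T^{⋆n}`. -/
noncomputable def antipode
    (hfin : ∀ x : H, ∃ N : ℕ, ∀ n, N < n → convPow (K := K) (H := H) n x = 0) :
    H →ₗ[K] H where
  toFun x := ∑ᶠ n : ℕ, ((-1 : K) ^ n) • convPow (K := K) (H := H) n x
  map_add' x y := by
    obtain ⟨N, hN⟩ := hfin x
    obtain ⟨M, hM⟩ := hfin y
    have hx : (Function.support fun n => ((-1 : K) ^ n) • convPow (K := K) (H := H) n x).Finite := by
      refine (Set.finite_Iic N).subset ?_
      intro n hn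
      simp only [Function.mem_support] at hn
      by_contra h
      exact hn (by rw [hN n (by simpa using h)]; simp)
    have hy : (Function.support fun n => ((-1 : K) ^ n) • convPow (K := K) (H := H) n y).Finite := by
      refine (Set.finite_Iic M).subset ?_
      intro n hn
      simp only [Function.mem_support] at hn
      by_contra h
      exact hn (by rw [hM n (by simpa using h)]; simp)
    rw [← finsum_add_distrib hx hy]
    apply finsum_congr
    intro n
    simp [smul_add]
  map_smul' c x := by
    obtain ⟨N, hN⟩ := hfin x
    have hx : (Function.support fun n => ((-1 : K) ^ n) • convPow (K := K) (H := H) n x).Finite := by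
      refine (Set.finite_Iic N).subset ?_
      intro n hn
      simp only [Function.mem_support] at hn
      by_contra h
      exact hn (by rw [hN n (by simpa using h)]; simp)
    simp only [RingHom.id_apply]
    rw [smul_finsum' c hx]
    apply finsum_congr
    intro n
    rw [map_smul]
    exact smul_comm _ _ _

lemma antipode_eq_sum
    (hfin : ∀ x : H, ∃ N : ℕ, ∀ n, N < n → convPow (K := K) (H := H) n x = 0)
    {x : H} {N M : ℕ} (hvan : ∀ n, N < n → convPow (K := K) (H := H) n x = 0)
    (hNM : N ≤ M) :
    antipode hfin x =
      (∑ n ∈ Finset.range (M + 1), ((-1 : K) ^ n) • convPow (K := K) (H := H) n) x := by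
  have : antipode hfin x = ∑ n ∈ Finset.range (M + 1),
      ((-1 : K) ^ n) • convPow (K := K) (H := H) n x := by
    apply finsum_eq_sum_of_support_subset
    intro n hn
    simp only [Function.mem_support] at hn
    simp only [Finset.coe_range, Set.mem_Iio]
    by_contra h
    exact hn (by rw [hvan n (by omega)]; simp)
  rw [this]
  simp [LinearMap.sum_apply]

lemma conv_Sn_id (N : ℕ) :
    conv (∑ n ∈ Finset.range (N + 1), ((-1 : K) ^ n) • convPow (K := K) (H := H) n)
        LinearMap.id =
      convUnit + ((-1 : K) ^ N) • convPow (N + 1) := by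
  induction N with
  | zero =>
      have h1 : convPow (K := K) (H := H) 1 = convT := by
        show conv convT convUnit = convT
        rw [conv_unit_right]
      have h0 : convPow (K := K) (H := H) 0 = convUnit := rfl
      simp only [zero_add, Finset.sum_range_one, pow_zero, one_smul, h1, h0]
      rw [conv_unit_left]
      exact id_eq_unit_add_T
  | succ N ih =>
      rw [Finset.sum_range_succ, conv_add_left, ih, conv_smul_left]
      have : conv (convPow (K := K) (H := H) (N + 1)) LinearMap.id =
          convPow (N + 1) + convPow (N + 2) := by
        rw [id_eq_unit_add_T, conv_add_right, conv_unit_right, conv_pow_T]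
      rw [this, smul_add]
      have hsign : ((-1 : K) ^ N) • convPow (K := K) (H := H) (N + 1) +
          ((-1 : K) ^ (N + 1)) • convPow (N + 1) = 0 := by
        rw [← add_smul]
        have : (-1 : K) ^ N + (-1 : K) ^ (N + 1) = 0 := by ring
        rw [this, zero_smul]
      calc convUnit + (-1 : K) ^ N • convPow (N + 1) +
            ((-1 : K) ^ (N + 1) • convPow (N + 1) + (-1 : K) ^ (N + 1) • convPow (N + 2))
          = convUnit + (((-1 : K) ^ N • convPow (N + 1) + (-1 : K) ^ (N + 1) • convPow (N + 1))
              + (-1 : K) ^ (N + 1) • convPow (N + 2)) := by abel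
        _ = convUnit + (-1 : K) ^ (N + 1) • convPow (N + 2) := by rw [hsign, zero_add]

lemma conv_id_Sn (N : ℕ) :
    conv LinearMap.id
        (∑ n ∈ Finset.range (N + 1), ((-1 : K) ^ n) • convPow (K := K) (H := H) n) =
      convUnit + ((-1 : K) ^ N) • convPow (N + 1) := by
  induction N with
  | zero =>
      have h1 : convPow (K := K) (H := H) 1 = convT := by
        show conv convT convUnit = convT
        rw [conv_unit_right]
      have h0 : convPow (K := K) (H := H) 0 = convUnit := rfl
      simp only [zero_add, Finset.sum_range_one, pow_zero, one_smul, h1, h0]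
      rw [conv_unit_right]
      exact id_eq_unit_add_T
  | succ N ih =>
      rw [Finset.sum_range_succ, conv_add_right, ih]
      have hsm : conv LinearMap.id ((-1 : K) ^ (N + 1) • convPow (K := K) (H := H) (N + 1)) =
          ((-1 : K) ^ (N + 1)) • conv LinearMap.id (convPow (N + 1)) := by
        ext x; simp [conv_apply, TensorProduct.map_smul_right]
      have : conv (LinearMap.id : H →ₗ[K] H) (convPow (N + 1)) =
          convPow (N + 1) + convPow (N + 2) := by
        rw [id_eq_unit_add_T, conv_add_left, conv_unit_left]
        rfl
      rw [hsm, this, smul_add]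
      have hsign : ((-1 : K) ^ N) • convPow (K := K) (H := H) (N + 1) +
          ((-1 : K) ^ (N + 1)) • convPow (N + 1) = 0 := by
        rw [← add_smul]
        have : (-1 : K) ^ N + (-1 : K) ^ (N + 1) = 0 := by ring
        rw [this, zero_smul]
      calc convUnit + (-1 : K) ^ N • convPow (N + 1) +
            ((-1 : K) ^ (N + 1) • convPow (N + 1) + (-1 : K) ^ (N + 1) • convPow (N + 2))
          = convUnit + (((-1 : K) ^ N • convPow (N + 1) + (-1 : K) ^ (N + 1) • convPow (N + 1))
              + (-1 : K) ^ (N + 1) • convPow (N + 2)) := by abel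
        _ = convUnit + (-1 : K) ^ (N + 1) • convPow (N + 2) := by rw [hsign, zero_add]

/-- every connected bialgebra is a Hopf algebra: the identity has a
convolution inverse `S` (the antipode), and on the augmentation ideal `ker ε` it
satisfies `S x = -x - m ∘ (S ⊗ id) (Δ̃ x)` for the reduced coproduct
`Δ̃ x = Δ x - 1 ⊗ x - x ⊗ 1`. -/
theorem connected_bialgebra_hopf
    (F : ℕ → Submodule K H)
    (hmono : Monotone F)
    (hcover : ∀ x : H, ∃ n, x ∈ F n)
    (hcomul : ∀ n, ∀ x ∈ F n,
      Coalgebra.comul (R := K) x ∈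
        ∑ i ∈ Finset.range (n + 1), tensorSub (F i) (F (n - i)))
    (hconn : F 0 = Submodule.span K {(1 : H)}) :
    ∃ S : H →ₗ[K] H,
      conv S LinearMap.id = convUnit ∧
      conv LinearMap.id S = convUnit ∧
      ∀ x : H, Coalgebra.counit (R := K) x = 0 →
        S x = -x - (LinearMap.mul' K H)
          ((TensorProduct.map S LinearMap.id)
            (Coalgebra.comul (R := K) x - (1 : H) ⊗ₜ[K] x - x ⊗ₜ[K] (1 : H))) := by
  have hfin : ∀ x : H, ∃ N : ℕ, ∀ n, N < n → convPow (K := K) (H := H) n x = 0 := by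
    intro x
    obtain ⟨N, hN⟩ := hcover x
    exact ⟨N, vanish' F hmono hcomul hconn hN⟩
  set S := antipode hfin with hSdef
  have hS1 : conv S LinearMap.id = convUnit := by
    ext x
    obtain ⟨N, hxN⟩ := hcover x
    set Sn : H →ₗ[K] H := ∑ n ∈ Finset.range (N + 1), ((-1 : K) ^ n) • convPow n with hSn
    have hrepl : conv S LinearMap.id x = conv Sn LinearMap.id x := by
      have hker : (LinearMap.mul' K H ∘ₗ TensorProduct.map (S - Sn) LinearMap.id)
          (Coalgebra.comul (R := K) x) = 0 := by
        refine killer _ _ _ _ ?_ (hcomul N x hxN)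
        intro i hi a ha b hb
        have hiN : i ≤ N := Nat.lt_succ_iff.mp (Finset.mem_range.mp hi)
        have ha' : S a = Sn a :=
          antipode_eq_sum hfin (vanish' F hmono hcomul hconn ha) hiN
        simp [LinearMap.sub_apply, ha']
      have hsub : conv S LinearMap.id x - conv Sn LinearMap.id x =
          (LinearMap.mul' K H ∘ₗ TensorProduct.map (S - Sn) LinearMap.id)
            (Coalgebra.comul (R := K) x) := by
        rw [LinearMap.comp_apply, map_sub_left]
        simp [conv_apply]
      exact sub_eq_zero.mp (hsub.trans hker)
    rw [hrepl, hSn, conv_Sn_id, LinearMap.add_apply, LinearMap.smul_apply,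
      vanish F hmono hcomul hconn N x hxN, smul_zero, add_zero]
  have hS2 : conv LinearMap.id S = convUnit := by
    ext x
    obtain ⟨N, hxN⟩ := hcover x
    set Sn : H →ₗ[K] H := ∑ n ∈ Finset.range (N + 1), ((-1 : K) ^ n) • convPow n with hSn
    have hrepl : conv LinearMap.id S x = conv LinearMap.id Sn x := by
      have hker : (LinearMap.mul' K H ∘ₗ TensorProduct.map LinearMap.id (S - Sn))
          (Coalgebra.comul (R := K) x) = 0 := by
        refine killer _ _ _ _ ?_ (hcomul N x hxN)
        intro i hi a ha b hb
        have hiN : N - i ≤ N := Nat.sub_le _ _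
        have hb' : S b = Sn b :=
          antipode_eq_sum hfin (vanish' F hmono hcomul hconn hb) hiN
        simp [LinearMap.sub_apply, hb']
      have hsub : conv LinearMap.id S x - conv LinearMap.id Sn x =
          (LinearMap.mul' K H ∘ₗ TensorProduct.map LinearMap.id (S - Sn))
            (Coalgebra.comul (R := K) x) := by
        rw [LinearMap.comp_apply, map_sub_right]
        simp [conv_apply]
      exact sub_eq_zero.mp (hsub.trans hker)
    rw [hrepl, hSn, conv_id_Sn, LinearMap.add_apply, LinearMap.smul_apply,
      vanish F hmono hcomul hconn N x hxN, smul_zero, add_zero]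
  refine ⟨S, hS1, hS2, ?_⟩
  intro x hεx
  have hone : S (1 : H) = 1 := by
    have h1F : (1 : H) ∈ F 0 := by
      rw [hconn]; exact Submodule.mem_span_singleton_self 1
    have h := antipode_eq_sum hfin (vanish' F hmono hcomul hconn h1F) (le_refl 0)
    rw [hSdef, h]
    have h0 : convPow (K := K) (H := H) 0 = convUnit := rfl
    simp [h0, convUnit]
  have e : (LinearMap.mul' K H) ((TensorProduct.map S LinearMap.id)
        (Coalgebra.comul (R := K) x - (1 : H) ⊗ₜ[K] x - x ⊗ₜ[K] (1 : H))) =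
      conv S LinearMap.id x - S 1 * x - S x * 1 := by
    simp only [map_sub, TensorProduct.map_tmul, LinearMap.mul'_apply, conv_apply,
      LinearMap.id_coe, id_eq]
  rw [e, hS1, hone]
  have : convUnit (K := K) (H := H) x = 0 := by
    simp [convUnit, hεx]
  rw [this]
  simp only [one_mul, mul_one, zero_sub]
  abel
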